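/- Let ε be a real-valued random variable with a bounded Lebesgue density f that is even (f(−x) = f(x) for almost every x) and continuous at 0, and let W be a real-valued random variable independent of ε with E[W²] < ∞. Then lim_{t→0⁺} t^{−2}·E[|ε − tW|·1{|ε| ≤ t|W|}] = 2·f(0)·E[W²]. -/

import Mathlib

open MeasureTheory ProbabilityTheory Filter
open scoped ENNReal NNReal

noncomputable section AuxTendsto

private noncomputable def kk (w u : ℝ) : ℝ := if |u| ≤ |w| then |u - w| else 0

private lemma kk_nonneg (w u : ℝ) : 0 ≤ kk w u := by unfold kk; split <;> positivity

private lemma kk_meas (w : ℝ) : Measurable (kk w) := by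
  unfold kk
  exact Measurable.ite (measurableSet_le (measurable_id.abs) measurable_const)
    ((measurable_id.sub_const w).abs) measurable_const

private lemma kk_meas2 : Measurable (fun p : ℝ × ℝ => kk p.1 p.2) := by
  unfold kk
  exact Measurable.ite (measurableSet_le (measurable_snd.abs) (measurable_fst.abs))
    ((measurable_snd.sub measurable_fst).abs) measurable_const

private lemma ii (a b : ℝ) : IntervalIntegrable (fun x : ℝ => x) volume a b :=
  continuous_id.intervalIntegrable a b

private lemma kk_eq_indicator (w : ℝ) :
    kk w = Set.indicator (Set.Icc (-|w|) |w|) (fun u => |u - w|) := by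
  funext u
  unfold kk
  rw [Set.indicator_apply]
  simp [Set.mem_Icc, abs_le]

private lemma kk_integral (w : ℝ) : (∫ u, kk w u) = 2 * w ^ 2 := by
  rw [kk_eq_indicator]
  rw [integral_indicator measurableSet_Icc, MeasureTheory.integral_Icc_eq_integral_Ioc,
    ← intervalIntegral.integral_of_le (by linarith [abs_nonneg w] : -|w| ≤ |w|)]
  rcases le_or_gt 0 w with hw | hw
  · rw [abs_of_nonneg hw]
    rw [intervalIntegral.integral_congr (g := fun u => w - u) ?_]
    · rw [intervalIntegral.integral_sub intervalIntegrable_const (ii _ _)]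
      simp [integral_id]
      ring
    · intro u hu
      rw [Set.uIcc_of_le (by linarith)] at hu
      simp only [Set.mem_Icc] at hu
      show |u - w| = w - u
      rw [abs_of_nonpos (by linarith [hu.2])]
      ring
  · rw [abs_of_neg hw]
    rw [intervalIntegral.integral_congr (g := fun u => u - w) ?_]
    · rw [intervalIntegral.integral_sub (ii _ _) intervalIntegrable_const]
      simp [integral_id]
      ring
    · intro u hu
      rw [Set.uIcc_of_le (by linarith)] at hu
      simp only [Set.mem_Icc, neg_neg] at hu
      show |u - w| = u - w
      rw [abs_of_nonneg (by linarith [hu.1])]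

private lemma kk_mul_le {f : ℝ → ℝ} (hf0 : ∀ x, 0 ≤ f x) {C : ℝ} (hC : ∀ x, f x ≤ C)
    (w : ℝ) (s u : ℝ) :
    ‖kk w u * f s‖ ≤ Set.indicator (Set.Icc (-|w|) |w|) (fun _ => 2 * |w| * C) u := by
  have hC0 : 0 ≤ C := le_trans (hf0 0) (hC 0)
  rw [Real.norm_eq_abs, abs_of_nonneg (mul_nonneg (kk_nonneg w u) (hf0 s))]
  unfold kk
  by_cases h : |u| ≤ |w|
  · rw [if_pos h, Set.indicator_of_mem (by simpa [Set.mem_Icc, abs_le] using h)]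
    have h1 : |u - w| ≤ 2 * |w| := by
      calc |u - w| ≤ |u| + |w| := abs_sub _ _
        _ ≤ 2 * |w| := by linarith
    exact mul_le_mul h1 (hC s) (hf0 s) (by positivity)
  · rw [if_neg h, zero_mul]
    exact Set.indicator_nonneg (fun _ _ => by positivity) u

private lemma bound_integrable (w C : ℝ) :
    Integrable (Set.indicator (Set.Icc (-|w|) |w|) (fun _ => 2 * |w| * C))
      (volume : Measure ℝ) := by
  rw [integrable_indicator_iff measurableSet_Icc]
  exact integrableOn_const (by simp [Real.volume_Icc])

private lemma bound_integral_le (w C : ℝ) (hC : 0 ≤ C) :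
    (∫ u, Set.indicator (Set.Icc (-|w|) |w|) (fun _ => 2 * |w| * C) u) ≤ 4 * C * w ^ 2 := by
  rw [integral_indicator measurableSet_Icc, setIntegral_const, measureReal_def, Real.volume_Icc, smul_eq_mul]
  have h1 : (ENNReal.ofReal (|w| - -|w|)).toReal = 2 * |w| := by
    rw [ENNReal.toReal_ofReal (by linarith [abs_nonneg w])]; ring
  rw [h1]
  have h2 : 2 * |w| * (2 * |w| * C) = 4 * C * w ^ 2 := by
    have := abs_mul_abs_self w
    nlinarith [abs_nonneg w]
  linarith [h2.le]

private lemma inner_tendsto {f : ℝ → ℝ} (hfm : Measurable f) (hf0 : ∀ x, 0 ≤ f x)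
    {C : ℝ} (hC : ∀ x, f x ≤ C) (hcont : ContinuousAt f 0) (w : ℝ) :
    Tendsto (fun t : ℝ => ∫ u, kk w u * f (t * u))
      (nhdsWithin 0 (Set.Ioi 0)) (nhds (2 * f 0 * w ^ 2)) := by
  have hlim : (2 : ℝ) * f 0 * w ^ 2 = ∫ u, kk w u * f 0 := by
    rw [integral_mul_const, kk_integral]; ring
  rw [hlim]
  refine tendsto_integral_filter_of_dominated_convergence
    (Set.indicator (Set.Icc (-|w|) |w|) (fun _ => 2 * |w| * C)) ?_ ?_ ?_ ?_
  · filter_upwards with t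
    exact (((kk_meas w).mul (hfm.comp (measurable_const.mul measurable_id))).aestronglyMeasurable)
  · filter_upwards with t
    filter_upwards with u
    exact kk_mul_le hf0 hC w _ u
  · exact bound_integrable w C
  · filter_upwards with u
    have h1 : Tendsto (fun t : ℝ => t * u) (nhdsWithin 0 (Set.Ioi 0)) (nhds 0) := by
      have h0 : Continuous (fun t : ℝ => t * u) := continuous_id.mul continuous_const
      have := (h0.tendsto (0:ℝ)).mono_left (nhdsWithin_le_nhds (s := Set.Ioi 0))
      simpa using this
    exact (hcont.tendsto.comp h1).const_mul (kk w u)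

end AuxTendsto

/-- If `ε` has a bounded, even Lebesgue density `f` continuous at `0`, and `W` is
independent of `ε` with `E[W²] < ∞`, then
`t⁻² · E[|ε − tW| · 1{|ε| ≤ t|W|}] → 2·f 0·E[W²]` as `t → 0⁺`. -/
theorem tendsto_expectation_abs_sub_indicator
    {Ω : Type*} [MeasurableSpace Ω] (μ : Measure Ω) [IsProbabilityMeasure μ]
    (ε W : Ω → ℝ) (hε : Measurable ε) (hW : Measurable W)
    (hindep : IndepFun ε W μ)
    (f : ℝ → ℝ) (hfm : Measurable f) (hf0 : ∀ x, 0 ≤ f x)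
    (hbdd : ∃ C : ℝ, ∀ x, f x ≤ C)
    (heven : ∀ᵐ x ∂(volume : Measure ℝ), f (-x) = f x)
    (hcont : ContinuousAt f 0)
    (hdens : μ.map ε = (volume : Measure ℝ).withDensity (fun x => ENNReal.ofReal (f x)))
    (hint : Integrable (fun ω => (W ω) ^ 2) μ) :
    Tendsto
      (fun t : ℝ => (∫ ω, (if |ε ω| ≤ t * |W ω| then |ε ω - t * W ω| else 0) ∂μ) / t ^ 2)
      (nhdsWithin 0 (Set.Ioi 0)) (nhds (2 * f 0 * ∫ ω, (W ω) ^ 2 ∂μ)) := by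
  obtain ⟨C, hC⟩ := hbdd
  have hC0 : 0 ≤ C := le_trans (hf0 0) (hC 0)
  set ν : Measure ℝ := μ.map W with hν
  have hνprob : IsProbabilityMeasure ν := Measure.isProbabilityMeasure_map hW.aemeasurable
  set φ : ℝ → ℝ → ℝ := fun t w => ∫ u, kk w u * f (t * u) with hφ
  have hw2 : Integrable (fun w : ℝ => w ^ 2) ν := by
    rw [hν, integrable_map_measure (by fun_prop) hW.aemeasurable]
    exact hint
  -- B tends to the limit
  have hB : Tendsto (fun t : ℝ => ∫ w, φ t w ∂ν) (nhdsWithin 0 (Set.Ioi 0))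
      (nhds (2 * f 0 * ∫ ω, (W ω) ^ 2 ∂μ)) := by
    have hlimeq : (2 : ℝ) * f 0 * ∫ ω, (W ω) ^ 2 ∂μ = ∫ w, 2 * f 0 * w ^ 2 ∂ν := by
      have hg : AEStronglyMeasurable (fun w : ℝ => 2 * f 0 * w ^ 2) (μ.map W) :=
        Measurable.aestronglyMeasurable (by fun_prop)
      rw [hν, integral_map hW.aemeasurable hg, integral_const_mul]
    rw [hlimeq]
    refine tendsto_integral_filter_of_dominated_convergence
      (fun w => 4 * C * w ^ 2) ?_ ?_ ?_ ?_
    · filter_upwards with t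
      have hm : StronglyMeasurable
          (Function.uncurry (fun w u : ℝ => kk w u * f (t * u))) := by
        apply Measurable.stronglyMeasurable
        exact kk_meas2.mul (hfm.comp (measurable_snd.const_mul t))
      exact (hm.integral_prod_right).aestronglyMeasurable
    · filter_upwards with t
      filter_upwards with w
      have hnn : 0 ≤ φ t w :=
        integral_nonneg (fun u => mul_nonneg (kk_nonneg w u) (hf0 _))
      rw [Real.norm_eq_abs, abs_of_nonneg hnn]
      calc φ t w ≤ ∫ u, Set.indicator (Set.Icc (-|w|) |w|) (fun _ => 2 * |w| * C) u := by
            refine integral_mono_of_nonneg ?_ (bound_integrable w C) ?_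
            · filter_upwards with u; exact mul_nonneg (kk_nonneg w u) (hf0 _)
            · filter_upwards with u
              exact le_trans (le_abs_self _) (kk_mul_le hf0 hC w _ u)
        _ ≤ 4 * C * w ^ 2 := bound_integral_le w C hC0
    · exact hw2.const_mul _
    · filter_upwards with w
      exact inner_tendsto hfm hf0 hC hcont w
  -- identification of the prelimit
  have hA : ∀ t : ℝ, 0 < t →
      (∫ ω, (if |ε ω| ≤ t * |W ω| then |ε ω - t * W ω| else 0) ∂μ) / t ^ 2
        = ∫ w, φ t w ∂ν := by
    intro t ht
    have hmap : μ.map (fun ω => (ε ω, W ω)) = (μ.map ε).prod ν :=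
      (indepFun_iff_map_prod_eq_prod_map_map hε.aemeasurable hW.aemeasurable).mp hindep
    have hεprob : IsProbabilityMeasure (μ.map ε) := Measure.isProbabilityMeasure_map hε.aemeasurable
    set G : ℝ × ℝ → ℝ := fun p => if |p.1| ≤ t * |p.2| then |p.1 - t * p.2| else 0 with hG
    have hGmeas : Measurable G := by
      apply Measurable.ite
      · exact measurableSet_le (measurable_fst.abs) ((measurable_snd.abs).const_mul t)
      · exact (measurable_fst.sub (measurable_snd.const_mul t)).abs
      · exact measurable_const
    have hGnn : ∀ p, 0 ≤ G p := by
      intro p; simp only [hG]; split <;> positivity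
    have hGle : ∀ p : ℝ × ℝ, ‖G p‖ ≤ 2 * t * |p.2| := by
      intro p
      rw [Real.norm_eq_abs, abs_of_nonneg (hGnn p)]
      simp only [hG]
      split
      · rename_i h
        calc |p.1 - t * p.2| ≤ |p.1| + |t * p.2| := abs_sub _ _
          _ ≤ t * |p.2| + t * |p.2| := by
              rw [abs_mul, abs_of_pos ht]; exact add_le_add h le_rfl
          _ = 2 * t * |p.2| := by ring
      · positivity
    -- integrability of |p.2|
    have hWabs : Integrable (fun w : ℝ => |w|) ν := by
      refine Integrable.mono' ((integrable_const (1:ℝ)).add hw2)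
        measurable_abs.aestronglyMeasurable ?_
      filter_upwards with w
      rw [Real.norm_eq_abs, abs_abs]
      simp only [Pi.add_apply]
      nlinarith [sq_nonneg (|w| - 1), sq_abs w, abs_nonneg w]
    have hsnd : Integrable (fun p : ℝ × ℝ => |p.2|) ((μ.map ε).prod ν) := by
      have hmap2 : Measure.map Prod.snd ((μ.map ε).prod ν) = ν := by
        rw [show Measure.map Prod.snd ((μ.map ε).prod ν) = ((μ.map ε).prod ν).snd from rfl,
          Measure.snd_prod]
      have := (integrable_map_measure (by rw [hmap2]; exact hWabs.1)
        measurable_snd.aemeasurable).mp (by rw [hmap2]; exact hWabs)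
      exact this
    have hGint : Integrable G ((μ.map ε).prod ν) := by
      exact Integrable.mono' (hsnd.const_mul (2 * t)) hGmeas.aestronglyMeasurable
        (Filter.Eventually.of_forall hGle)
    -- Step 1: rewrite as product integral
    have h1 : (∫ ω, (if |ε ω| ≤ t * |W ω| then |ε ω - t * W ω| else 0) ∂μ)
        = ∫ p, G p ∂((μ.map ε).prod ν) := by
      rw [← hmap, integral_map (hε.aemeasurable.prodMk hW.aemeasurable)
        hGmeas.aestronglyMeasurable]
    -- Step 2: Fubini
    have h2 : ∫ p, G p ∂((μ.map ε).prod ν) = ∫ w, ∫ x, G (x, w) ∂(μ.map ε) ∂ν :=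
      integral_prod_symm G hGint
    -- Step 3: density + substitution, for each w
    have h3 : ∀ w : ℝ, ∫ x, G (x, w) ∂(μ.map ε) = t ^ 2 * φ t w := by
      intro w
      have hd : μ.map ε = (volume : Measure ℝ).withDensity
          (fun x => ((f x).toNNReal : ℝ≥0∞)) := hdens
      have hfm' : Measurable (fun x => (f x).toNNReal) := measurable_real_toNNReal.comp hfm
      rw [hd, integral_withDensity_eq_integral_smul hfm']
      have hsmul : ∀ x, (f x).toNNReal • G (x, w) = f x * G (x, w) := by
        intro x
        rw [NNReal.smul_def, Real.coe_toNNReal _ (hf0 x), smul_eq_mul]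
      simp_rw [hsmul]
      -- substitution x = t * u
      have h := Measure.integral_comp_mul_left (fun x => f x * G (x, w)) t
      have hcongr : ∀ x : ℝ, f (t * x) * G (t * x, w) = t * (kk w x * f (t * x)) := by
        intro x
        have hcond : (|t * x| ≤ t * |w|) ↔ (|x| ≤ |w|) := by
          rw [abs_mul, abs_of_pos ht]
          exact mul_le_mul_iff_right₀ ht
        simp only [hG, kk]
        by_cases hc : |x| ≤ |w|
        · rw [if_pos (hcond.mpr hc), if_pos hc]
          have : |t * x - t * w| = t * |x - w| := by
            rw [← mul_sub, abs_mul, abs_of_pos ht]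
          rw [this]; ring
        · rw [if_neg (fun hh => hc (hcond.mp hh)), if_neg hc]
          ring
      simp only [hcongr] at h
      rw [integral_const_mul, abs_of_pos (inv_pos.mpr ht), smul_eq_mul] at h
      -- h : t * ∫ u, kk w u * f (t*u) = t⁻¹ * ∫ x, f x * G (x, w)
      have ht2 : t ≠ 0 := ne_of_gt ht
      field_simp at h
      rw [hφ]
      nlinarith [h]
    calc (∫ ω, (if |ε ω| ≤ t * |W ω| then |ε ω - t * W ω| else 0) ∂μ) / t ^ 2
        = (∫ w, ∫ x, G (x, w) ∂(μ.map ε) ∂ν) / t ^ 2 := by rw [h1, h2]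
      _ = (∫ w, t ^ 2 * φ t w ∂ν) / t ^ 2 := by simp_rw [h3]
      _ = ∫ w, φ t w ∂ν := by
          rw [integral_const_mul]
          field_simp
  refine hB.congr' ?_
  filter_upwards [self_mem_nhdsWithin] with t ht
  exact (hA t ht).symm
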